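/- Let u, v : ℝ² → ℝ be C¹ on a neighborhood of (t₀,x₀) with u(t₀,x₀) ≠ 0 and u differentiable enough that u_x exists, and suppose they satisfy the potential system v_x = u, v_t = u_x / u there. Set y₀ = v(t₀,x₀), and suppose ũ, ṽ are C¹ functions on a neighborhood of (t₀,y₀) satisfying ṽ(t, v(t,x)) = x and ũ(t, v(t,x)) = 1/u(t,x) for all (t,x) in a neighborhood of (t₀,x₀). Then at (t₀,y₀) the transformed functions satisfy the same potential system: ∂ṽ/∂y = ũ and ∂ṽ/∂t = (∂ũ/∂y)/ũ. (This is the potential hodograph transformation t̃ = t, x̃ = v, ũ = u⁻¹, ṽ = x, a discrete symmetry of the potential system of the fast diffusion equation.) -/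

import Mathlib

/-- Partial derivative with respect to the first variable (time). -/
noncomputable def pt (u : ℝ × ℝ → ℝ) (p : ℝ × ℝ) : ℝ :=
  deriv (fun s => u (s, p.2)) p.1

/-- Partial derivative with respect to the second variable (space). -/
noncomputable def px (u : ℝ × ℝ → ℝ) (p : ℝ × ℝ) : ℝ :=
  deriv (fun y => u (p.1, y)) p.2

private lemma comp_line (f : ℝ × ℝ → ℝ) (g : ℝ → ℝ) (t a d : ℝ)
    (hf : DifferentiableAt ℝ f (t, g a)) (hg : HasDerivAt g d a) :
    HasDerivAt (fun y => f (t, g y)) (fderiv ℝ f (t, g a) (0, d)) a :=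
  hf.hasFDerivAt.comp_hasDerivAt a (HasDerivAt.prodMk (hasDerivAt_const a t) hg)

private lemma comp_curve (f : ℝ × ℝ → ℝ) (g : ℝ → ℝ) (a d : ℝ)
    (hf : DifferentiableAt ℝ f (a, g a)) (hg : HasDerivAt g d a) :
    HasDerivAt (fun s => f (s, g s)) (fderiv ℝ f (a, g a) (1, d)) a :=
  hf.hasFDerivAt.comp_hasDerivAt a (HasDerivAt.prodMk (hasDerivAt_id a) hg)

/-- The potential hodograph transformation `t̃ = t, x̃ = v, ũ = u⁻¹, ṽ = x` is a discrete
symmetry of the potential system `v_x = u, v_t = u_x / u` of the fast diffusion equation. -/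
theorem potential_hodograph_fast_diffusion
    (u v : ℝ × ℝ → ℝ) (t₀ x₀ : ℝ)
    (hu : ContDiffAt ℝ 1 u (t₀, x₀)) (hv : ContDiffAt ℝ 1 v (t₀, x₀))
    (hu0 : u (t₀, x₀) ≠ 0)
    (hux : ∀ᶠ p in nhds (t₀, x₀), DifferentiableAt ℝ (fun y => u (p.1, y)) p.2)
    (hsys : ∀ᶠ p in nhds (t₀, x₀), px v p = u p ∧ pt v p = px u p / u p)
    (y₀ : ℝ) (hy₀ : y₀ = v (t₀, x₀))
    (uu vv : ℝ × ℝ → ℝ)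
    (huu : ContDiffAt ℝ 1 uu (t₀, y₀)) (hvv : ContDiffAt ℝ 1 vv (t₀, y₀))
    (htr : ∀ᶠ p in nhds (t₀, x₀), vv (p.1, v p) = p.2 ∧ uu (p.1, v p) = 1 / u p) :
    px vv (t₀, y₀) = uu (t₀, y₀) ∧
      pt vv (t₀, y₀) = px uu (t₀, y₀) / uu (t₀, y₀) := by
  subst hy₀
  obtain ⟨hvx0, hvt0⟩ := hsys.self_of_nhds
  obtain ⟨hvv0, huu0⟩ := htr.self_of_nhds
  set c : ℝ := u (t₀, x₀) with hc
  set e : ℝ := px u (t₀, x₀) with he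
  have huu0' : uu (t₀, v (t₀, x₀)) = 1 / c := huu0
  have hvd : DifferentiableAt ℝ v (t₀, x₀) := hv.differentiableAt one_ne_zero
  have hvvd : DifferentiableAt ℝ vv (t₀, v (t₀, x₀)) := hvv.differentiableAt one_ne_zero
  have huud : DifferentiableAt ℝ uu (t₀, v (t₀, x₀)) := huu.differentiableAt one_ne_zero
  set Lv := fderiv ℝ v (t₀, x₀) with hLv
  set Lvv := fderiv ℝ vv (t₀, v (t₀, x₀)) with hLvv
  set Luu := fderiv ℝ uu (t₀, v (t₀, x₀)) with hLuu
  -- partial derivatives of v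
  have hvx : HasDerivAt (fun y => v (t₀, y)) (Lv (0, 1)) x₀ :=
    comp_line v (fun y => y) t₀ x₀ 1 hvd (hasDerivAt_id x₀)
  have hvt : HasDerivAt (fun s => v (s, x₀)) (Lv (1, 0)) t₀ :=
    comp_curve v (fun _ => x₀) t₀ 0 hvd (hasDerivAt_const t₀ x₀)
  have hLv01 : Lv (0, 1) = c := by rw [← hvx.deriv]; exact hvx0
  have hLv10 : Lv (1, 0) = e / c := by rw [← hvt.deriv]; exact hvt0
  -- eventual identities along lines
  have hline_x : Filter.Tendsto (fun y : ℝ => ((t₀ : ℝ), y)) (nhds x₀) (nhds (t₀, x₀)) :=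
    (continuous_const.prodMk continuous_id).tendsto x₀
  have hx_ev : ∀ᶠ y in nhds x₀,
      vv (t₀, v (t₀, y)) = y ∧ uu (t₀, v (t₀, y)) = 1 / u (t₀, y) :=
    hline_x.eventually htr
  have hline_t : Filter.Tendsto (fun s : ℝ => (s, x₀)) (nhds t₀) (nhds (t₀, x₀)) :=
    (continuous_id.prodMk continuous_const).tendsto t₀
  have ht_ev : ∀ᶠ s in nhds t₀, vv (s, v (s, x₀)) = x₀ :=
    (hline_t.eventually htr).mono fun s hs => hs.1
  -- chain rule on the identities
  have A1 : HasDerivAt (fun y => vv (t₀, v (t₀, y))) (Lvv (0, Lv (0, 1))) x₀ :=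
    comp_line vv (fun y => v (t₀, y)) t₀ x₀ _ hvvd hvx
  have A1' : HasDerivAt (fun y => vv (t₀, v (t₀, y))) 1 x₀ :=
    (hasDerivAt_id x₀).congr_of_eventuallyEq (hx_ev.mono fun y hy => hy.1)
  have eq1 : Lvv (0, Lv (0, 1)) = 1 := A1.unique A1'
  have B1 : HasDerivAt (fun s => vv (s, v (s, x₀))) (Lvv (1, Lv (1, 0))) t₀ :=
    comp_curve vv (fun s => v (s, x₀)) t₀ _ hvvd hvt
  have B1' : HasDerivAt (fun s => vv (s, v (s, x₀))) 0 t₀ :=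
    (hasDerivAt_const t₀ x₀).congr_of_eventuallyEq ht_ev
  have eq2 : Lvv (1, Lv (1, 0)) = 0 := B1.unique B1'
  have hue : HasDerivAt (fun y => u (t₀, y)) e x₀ := hux.self_of_nhds.hasDerivAt
  have hinv : HasDerivAt (fun y => 1 / u (t₀, y)) (-e / c ^ 2) x₀ := by
    have h := (hasDerivAt_inv hu0).comp x₀ hue
    have hf : ((fun y : ℝ => y⁻¹) ∘ fun y => u (t₀, y)) = fun y => 1 / u (t₀, y) := by
      funext y; simp [one_div]
    rw [hf] at h
    exact h.congr_deriv (by ring)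
  have C1 : HasDerivAt (fun y => uu (t₀, v (t₀, y))) (Luu (0, Lv (0, 1))) x₀ :=
    comp_line uu (fun y => v (t₀, y)) t₀ x₀ _ huud hvx
  have C1' : HasDerivAt (fun y => uu (t₀, v (t₀, y))) (-e / c ^ 2) x₀ :=
    hinv.congr_of_eventuallyEq (hx_ev.mono fun y hy => hy.2)
  have eq3 : Luu (0, Lv (0, 1)) = -e / c ^ 2 := C1.unique C1'
  -- partial derivatives of vv, uu at the transformed point
  have hpvvx : px vv (t₀, v (t₀, x₀)) = Lvv (0, 1) :=
    (comp_line vv (fun y => y) t₀ (v (t₀, x₀)) 1 hvvd (hasDerivAt_id _)).deriv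
  have hpvvt : pt vv (t₀, v (t₀, x₀)) = Lvv (1, 0) :=
    (comp_curve vv (fun _ => v (t₀, x₀)) t₀ 0 hvvd (hasDerivAt_const _ _)).deriv
  have hpuux : px uu (t₀, v (t₀, x₀)) = Luu (0, 1) :=
    (comp_line uu (fun y => y) t₀ (v (t₀, x₀)) 1 huud (hasDerivAt_id _)).deriv
  -- linear algebra
  have lin1 : Lvv (0, Lv (0, 1)) = c * Lvv (0, 1) := by
    rw [hLv01, show ((0 : ℝ), c) = c • ((0 : ℝ), (1 : ℝ)) by simp, map_smul]; rfl
  have lin2 : Lvv (1, Lv (1, 0)) = Lvv (1, 0) + (e / c) * Lvv (0, 1) := by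
    rw [hLv10, show ((1 : ℝ), e / c) = ((1 : ℝ), (0 : ℝ)) + (e / c) • ((0 : ℝ), (1 : ℝ)) by
      simp, map_add, map_smul]; rfl
  have lin3 : Luu (0, Lv (0, 1)) = c * Luu (0, 1) := by
    rw [hLv01, show ((0 : ℝ), c) = c • ((0 : ℝ), (1 : ℝ)) by simp, map_smul]; rfl
  rw [lin1] at eq1
  rw [lin2] at eq2
  rw [lin3] at eq3
  have h01 : Lvv (0, 1) = 1 / c := by
    field_simp
    linear_combination eq1
  have hU : Luu (0, 1) = -e / c ^ 3 := by
    field_simp at eq3 ⊢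
    linear_combination eq3
  have h10 : Lvv (1, 0) = -e / c ^ 2 := by
    rw [h01] at eq2
    field_simp at eq2 ⊢
    linear_combination eq2
  constructor
  · rw [hpvvx, huu0', h01]
  · rw [hpvvt, hpuux, huu0', h10, hU]
    field_simp
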